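/- The double sum ∑_{m,n ≥ 0} (-1)^n q^{m^2 + m + mn + n(n+1)/2} / ((q)_m (q)_n) equals the false theta function h_4(q) = ∑_{n≥0} q^{2n(n+1)-n} - ∑_{n<0} q^{2n(n+1)-n} = ∑_{n≥0} (q^{2n^2+n} - q^{2n^2+3n+1}). -/

import Mathlib

open scoped BigOperators

noncomputable def qPoch (q : ℂ) (n : ℕ) : ℂ := ∏ k ∈ Finset.range n, (1 - q ^ (k + 1))

noncomputable def qPochInf (q : ℂ) : ℂ := ∏' k : ℕ, (1 - q ^ (k + 1))

noncomputable def hseries (b : ℕ) (q : ℂ) : ℂ :=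
  ∑' n : ℤ, (if Odd b then (-1 : ℂ) ^ n else if 0 ≤ n then 1 else -1) *
    q ^ ((b : ℤ) * n * (n + 1) / 2 - n)

noncomputable def fc (q : ℂ) (m n : ℕ) : ℂ :=
  (-1 : ℂ) ^ n * q ^ (m ^ 2 + m + m * n + n * (n + 1) / 2) / (qPoch q m * qPoch q n)

lemma tri (n : ℕ) : (n + 1) * (n + 1 + 1) / 2 = n * (n + 1) / 2 + (n + 1) := by
  obtain ⟨c, hc⟩ := Nat.even_mul_succ_self n
  have h2 : (n + 1) * (n + 1 + 1) = (c + (n + 1)) + (c + (n + 1)) := by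
    have h3 : (n + 1) * (n + 1 + 1) = n * (n + 1) + ((n + 1) + (n + 1)) := by ring
    rw [h3, hc]; ring
  rw [hc, h2]; omega

section Fixedq

variable {q : ℂ} (hq : ‖q‖ < 1)

include hq

lemma one_sub_pow_ne (k : ℕ) : 1 - q ^ (k + 1) ≠ 0 := by
  intro h
  have h1 : q ^ (k + 1) = 1 := by linear_combination -h
  have h2 : ‖q ^ (k + 1)‖ ≤ ‖q‖ := by
    rw [norm_pow]
    exact pow_le_of_le_one (norm_nonneg q) hq.le (Nat.succ_ne_zero k)
  rw [h1, norm_one] at h2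
  linarith

lemma qPoch_ne_zero (m : ℕ) : qPoch q m ≠ 0 := by
  refine Finset.prod_ne_zero_iff.mpr fun k _ => one_sub_pow_ne hq k

omit hq in
lemma qPoch_succ (m : ℕ) : qPoch q (m + 1) = qPoch q m * (1 - q ^ (m + 1)) :=
  Finset.prod_range_succ _ m

lemma L1 (m n : ℕ) : (q ^ (n + 1) - 1) * fc q m (n + 1) = q ^ (m + n + 1) * fc q m n := by
  have e1 : m ^ 2 + m + m * (n + 1) + (n + 1) * (n + 1 + 1) / 2
      = (m + n + 1) + (m ^ 2 + m + m * n + n * (n + 1) / 2) := by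
    rw [tri]; ring
  unfold fc
  rw [e1, pow_add, qPoch_succ, pow_succ]
  have h1 := qPoch_ne_zero hq m
  have h2 := qPoch_ne_zero hq n
  have h3 := one_sub_pow_ne hq n
  field_simp
  ring

lemma L2 (m n : ℕ) : (1 - q ^ (m + 1)) * fc q (m + 1) n = q ^ (2 * m + 2 + n) * fc q m n := by
  have e1 : (m + 1) ^ 2 + (m + 1) + (m + 1) * n + n * (n + 1) / 2
      = (2 * m + 2 + n) + (m ^ 2 + m + m * n + n * (n + 1) / 2) := by ring
  unfold fc
  rw [e1, pow_add, qPoch_succ]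
  have h1 := qPoch_ne_zero hq m
  have h2 := qPoch_ne_zero hq n
  have h3 := one_sub_pow_ne hq m
  field_simp
  ring


noncomputable def wc (q : ℂ) (J m : ℕ) : ℂ := q ^ (J - m) * fc q m (J - m)

lemma wratio {J m : ℕ} (hm : m < J) :
    (1 - q ^ (m + 1)) * wc q J (m + 1) = -(q ^ m * ((1 - q ^ (J - m)) * wc q J m)) := by
  obtain ⟨n, rfl⟩ : ∃ n, J = m + 1 + n := ⟨J - (m + 1), by omega⟩
  unfold wc
  rw [show m + 1 + n - (m + 1) = n by omega, show m + 1 + n - m = n + 1 by omega]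
  have h1 := L1 hq m n
  have h2 := L2 hq m n
  linear_combination q ^ n * h2 - q ^ (m + n + 1) * h1

lemma cert (J : ℕ) : ∀ m, m ≤ J →
    (1 - q ^ J) * ∑ i ∈ Finset.range m, wc q J i = -((1 - q ^ m) * wc q J m) := by
  intro m
  induction m with
  | zero => intro _; simp
  | succ m IH =>
    intro hm
    have hm' : m < J := hm
    rw [Finset.sum_range_succ, mul_add, IH (le_of_lt hm')]
    have hJ : q ^ m * q ^ (J - m) = q ^ J := by
      rw [← pow_add]; congr 1; omega
    linear_combination (wratio hq hm') + (wc q J m) * hJ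

lemma sum0 {J : ℕ} (hJ : 1 ≤ J) : ∑ m ∈ Finset.range (J + 1), wc q J m = 0 := by
  have hc := cert hq J J le_rfl
  have hne : (1 - q ^ J) ≠ 0 := by
    have := one_sub_pow_ne hq (J - 1)
    rwa [show J - 1 + 1 = J by omega] at this
  have hs : ∑ i ∈ Finset.range J, wc q J i = -(wc q J J) := by
    apply mul_left_cancel₀ hne
    rw [hc]; ring
  rw [Finset.sum_range_succ, hs]; ring

lemma wsplit {J m : ℕ} (hm : m ≤ J) :
    wc q (J + 1) m = fc q m (J + 1 - m) + q ^ (J + 1) * fc q m (J - m) := by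
  obtain ⟨n, rfl⟩ : ∃ n, J = m + n := ⟨J - m, by omega⟩
  unfold wc
  rw [show m + n + 1 - m = n + 1 by omega, show m + n - m = n by omega]
  have h1 := L1 hq m n
  linear_combination h1

lemma Dstep (J : ℕ) :
    ∑ m ∈ Finset.range (J + 2), fc q m (J + 1 - m)
      = -(q ^ (J + 1) * ∑ m ∈ Finset.range (J + 1), fc q m (J - m)) := by
  have h0 := sum0 hq (J := J + 1) (by omega)
  rw [Finset.sum_range_succ] at h0
  have hsplit : ∑ m ∈ Finset.range (J + 1), wc q (J + 1) m
      = ∑ m ∈ Finset.range (J + 1), (fc q m (J + 1 - m) + q ^ (J + 1) * fc q m (J - m)) := by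
    refine Finset.sum_congr rfl fun m hm => ?_
    exact wsplit hq (by simpa using Nat.lt_succ_iff.mp (Finset.mem_range.mp hm))
  rw [hsplit, Finset.sum_add_distrib, ← Finset.mul_sum] at h0
  have hlast : wc q (J + 1) (J + 1) = fc q (J + 1) 0 := by
    unfold wc; rw [Nat.sub_self]; simp
  rw [hlast] at h0
  rw [Finset.sum_range_succ, Nat.sub_self]
  linear_combination h0

lemma diag (J : ℕ) :
    ∑ m ∈ Finset.range (J + 1), fc q m (J - m) = (-1) ^ J * q ^ (J * (J + 1) / 2) := by
  induction J with
  | zero => simp [fc, qPoch]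
  | succ J IH =>
    rw [show J + 1 + 1 = J + 2 from rfl, Dstep hq, IH]
    rw [tri, pow_add, pow_succ]
    ring


omit hq in
lemma exp_aux {t x : ℝ} (ht : t < 1) (hx0 : 0 ≤ x) (hxt : x ≤ t) :
    Real.exp (-(x / (1 - t))) ≤ 1 - x := by
  have h1t : 0 < 1 - t := by linarith
  have hy : 0 ≤ x / (1 - t) := div_nonneg hx0 h1t.le
  have he := Real.add_one_le_exp (x / (1 - t))
  have hprod : Real.exp (-(x / (1 - t))) * Real.exp (x / (1 - t)) = 1 := by
    rw [← Real.exp_add]; simp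
  have hpos := Real.exp_pos (-(x / (1 - t)))
  have hkey : (1 - x) * (x / (1 - t) + 1) ≥ 1 := by
    rw [ge_iff_le, ← sub_nonneg]
    have : (1 - x) * (x / (1 - t) + 1) - 1 = x * (t - x) / (1 - t) := by
      field_simp; ring
    rw [this]
    apply div_nonneg (mul_nonneg hx0 (by linarith)) (by linarith)
  nlinarith [mul_le_mul_of_nonneg_left he hpos.le]

lemma qPoch_lb (m : ℕ) :
    Real.exp (-((∑' k : ℕ, ‖q‖ ^ (k + 1)) / (1 - ‖q‖))) ≤ ‖qPoch q m‖ := by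
  have ht0 : (0:ℝ) ≤ ‖q‖ := norm_nonneg q
  have hgeo : Summable (fun k : ℕ => ‖q‖ ^ (k + 1)) := by
    simpa [pow_succ] using (summable_geometric_of_lt_one ht0 hq).mul_right ‖q‖
  have hpartial : ∑ k ∈ Finset.range m, ‖q‖ ^ (k + 1) ≤ ∑' k : ℕ, ‖q‖ ^ (k + 1) :=
    Summable.sum_le_tsum _ (fun k _ => pow_nonneg ht0 _) hgeo
  have hstep1 : Real.exp (-((∑' k : ℕ, ‖q‖ ^ (k + 1)) / (1 - ‖q‖)))
      ≤ ∏ k ∈ Finset.range m, Real.exp (-(‖q‖ ^ (k + 1) / (1 - ‖q‖))) := by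
    rw [← Real.exp_sum]
    apply Real.exp_le_exp.mpr
    have h1t : (0:ℝ) < 1 - ‖q‖ := by linarith
    have hrw : ∑ x ∈ Finset.range m, -(‖q‖ ^ (x + 1) / (1 - ‖q‖))
        = -((∑ x ∈ Finset.range m, ‖q‖ ^ (x + 1)) / (1 - ‖q‖)) := by
      rw [Finset.sum_div, ← Finset.sum_neg_distrib]
    rw [hrw, neg_le_neg_iff]
    gcongr
  refine hstep1.trans ?_
  have hnorm : ‖qPoch q m‖ = ∏ k ∈ Finset.range m, ‖1 - q ^ (k + 1)‖ := by
    rw [qPoch]; exact norm_prod _ _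
  rw [hnorm]
  apply Finset.prod_le_prod (fun k _ => (Real.exp_pos _).le)
  intro k _
  have hle : ‖q‖ ^ (k + 1) ≤ ‖q‖ :=
    pow_le_of_le_one ht0 hq.le (Nat.succ_ne_zero k)
  calc Real.exp (-(‖q‖ ^ (k + 1) / (1 - ‖q‖))) ≤ 1 - ‖q‖ ^ (k + 1) :=
        exp_aux hq (pow_nonneg ht0 _) hle
    _ ≤ ‖1 - q ^ (k + 1)‖ := by
        calc (1:ℝ) - ‖q‖ ^ (k + 1) = ‖(1:ℂ)‖ - ‖q ^ (k + 1)‖ := by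
              rw [norm_one, norm_pow]
          _ ≤ ‖1 - q ^ (k + 1)‖ := norm_sub_norm_le _ _

omit hq in
lemma exp_ge (m n : ℕ) : m + n ≤ m ^ 2 + m + m * n + n * (n + 1) / 2 := by
  have hT : n ≤ n * (n + 1) / 2 := by
    cases n with
    | zero => simp
    | succ k =>
      rw [Nat.le_div_iff_mul_le (by norm_num)]
      exact Nat.mul_le_mul le_rfl (by omega)
  calc m + n ≤ m + n * (n + 1) / 2 := Nat.add_le_add_left hT m
    _ ≤ m ^ 2 + m + m * n + n * (n + 1) / 2 := by
        refine Nat.add_le_add_right ?_ _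
        calc m ≤ m ^ 2 + m := Nat.le_add_left m _
          _ ≤ m ^ 2 + m + m * n := Nat.le_add_right _ _

lemma norm_fc_le (m n : ℕ) :
    ‖fc q m n‖ ≤ ((Real.exp (-((∑' k : ℕ, ‖q‖ ^ (k + 1)) / (1 - ‖q‖))))⁻¹ * ‖q‖ ^ m) *
      ((Real.exp (-((∑' k : ℕ, ‖q‖ ^ (k + 1)) / (1 - ‖q‖))))⁻¹ * ‖q‖ ^ n) := by
  set c := Real.exp (-((∑' k : ℕ, ‖q‖ ^ (k + 1)) / (1 - ‖q‖))) with hc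
  have hcpos : 0 < c := Real.exp_pos _
  have ht0 : (0:ℝ) ≤ ‖q‖ := norm_nonneg q
  have hnorm : ‖fc q m n‖ = ‖q‖ ^ (m ^ 2 + m + m * n + n * (n + 1) / 2)
      / (‖qPoch q m‖ * ‖qPoch q n‖) := by
    rw [fc, norm_div, norm_mul, norm_mul, norm_pow, norm_pow, norm_neg, norm_one,
      one_pow, one_mul]
  rw [hnorm]
  have h1 : ‖q‖ ^ (m ^ 2 + m + m * n + n * (n + 1) / 2) ≤ ‖q‖ ^ (m + n) :=
    pow_le_pow_of_le_one ht0 hq.le (exp_ge m n)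
  have h2 : c * c ≤ ‖qPoch q m‖ * ‖qPoch q n‖ :=
    mul_le_mul (qPoch_lb hq m) (qPoch_lb hq n) hcpos.le (norm_nonneg _)
  calc ‖q‖ ^ (m ^ 2 + m + m * n + n * (n + 1) / 2) / (‖qPoch q m‖ * ‖qPoch q n‖)
      ≤ ‖q‖ ^ (m + n) / (c * c) := by
        apply div_le_div₀ (pow_nonneg ht0 _) h1 (by positivity) h2
    _ = (c⁻¹ * ‖q‖ ^ m) * (c⁻¹ * ‖q‖ ^ n) := by
        rw [pow_add]; field_simp

lemma summable_fc : Summable (fun p : ℕ × ℕ => fc q p.1 p.2) := by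
  set c := Real.exp (-((∑' k : ℕ, ‖q‖ ^ (k + 1)) / (1 - ‖q‖))) with hc
  have ht0 : (0:ℝ) ≤ ‖q‖ := norm_nonneg q
  have hg : Summable (fun k : ℕ => c⁻¹ * ‖q‖ ^ k) :=
    (summable_geometric_of_lt_one ht0 hq).mul_left _
  have hG : Summable (fun p : ℕ × ℕ => (c⁻¹ * ‖q‖ ^ p.1) * (c⁻¹ * ‖q‖ ^ p.2)) :=
    hg.mul_of_nonneg hg (fun k => by positivity) (fun k => by positivity)
  exact Summable.of_norm_bounded hG (fun p => norm_fc_le hq p.1 p.2)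


lemma summable_part (a : ℕ → ℂ) (h : ∀ k, ‖a k‖ ≤ ‖q‖ ^ k) : Summable a :=
  Summable.of_norm_bounded (summable_geometric_of_lt_one (norm_nonneg q) hq) h

omit hq in
lemma le_tri (n : ℕ) : n ≤ n * (n + 1) / 2 := by
  cases n with
  | zero => simp
  | succ k =>
    rw [Nat.le_div_iff_mul_le (by norm_num)]
    exact Nat.mul_le_mul le_rfl (by omega)

lemma lhs_eq : (∑' (m : ℕ) (n : ℕ), fc q m n) = ∑' j : ℕ, (-1 : ℂ) ^ j * q ^ (j * (j + 1) / 2) := by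
  have hF : Summable (fun p : ℕ × ℕ => fc q p.1 p.2) := summable_fc hq
  have h1 : (∑' (m : ℕ) (n : ℕ), fc q m n) = ∑' p : ℕ × ℕ, fc q p.1 p.2 :=
    (Summable.tsum_prod' hF hF.prod_factor).symm
  rw [h1]
  have h2 : ∑' p : ℕ × ℕ, fc q p.1 p.2
      = ∑' x : (Σ j : ℕ, Finset.HasAntidiagonal.antidiagonal j), fc q (x.2 : ℕ × ℕ).1 (x.2 : ℕ × ℕ).2 :=
    (Finset.HasAntidiagonal.sigmaAntidiagonalEquivProd.tsum_eq (fun p : ℕ × ℕ => fc q p.1 p.2)).symm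
  rw [h2]
  have hsig : Summable (fun x : (Σ j : ℕ, Finset.HasAntidiagonal.antidiagonal j) =>
      fc q (x.2 : ℕ × ℕ).1 (x.2 : ℕ × ℕ).2) :=
    Finset.HasAntidiagonal.sigmaAntidiagonalEquivProd.summable_iff.mpr hF
  rw [Summable.tsum_sigma' (fun j => Summable.of_finite) hsig]
  refine tsum_congr fun j => ?_
  rw [Finset.tsum_subtype (Finset.HasAntidiagonal.antidiagonal j) (fun p : ℕ × ℕ => fc q p.1 p.2),
    Finset.Nat.sum_antidiagonal_eq_sum_range_succ_mk]
  exact diag hq j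

lemma rhs_eq : hseries 4 q = ∑' j : ℕ, (-1 : ℂ) ^ j * q ^ (j * (j + 1) / 2) := by
  have hg : hseries 4 q = ∑' n : ℤ, (if 0 ≤ n then (1:ℂ) else -1) * q ^ ((4:ℤ) * n * (n + 1) / 2 - n) := by
    unfold hseries
    exact tsum_congr fun n => by rw [if_neg (by decide : ¬ Odd 4)]; norm_num
  have eq1 : (fun n : ℕ => (if 0 ≤ (n:ℤ) then (1:ℂ) else -1) * q ^ ((4:ℤ) * n * (n + 1) / 2 - n))
      = fun n : ℕ => q ^ (2 * n ^ 2 + n) := by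
    funext n
    rw [if_pos (by positivity)]
    have he : (4:ℤ) * n * (n + 1) / 2 - n = ((2 * n ^ 2 + n : ℕ) : ℤ) := by
      have h4 : (4:ℤ) * n * (n + 1) = 2 * (2 * (n:ℤ) * ((n:ℤ) + 1)) := by ring
      rw [h4, Int.mul_ediv_cancel_left _ two_ne_zero]
      push_cast; ring
    rw [he, zpow_natCast, one_mul]
  have eq2 : (fun n : ℕ => (if 0 ≤ (-(n+1):ℤ) then (1:ℂ) else -1) * q ^ ((4:ℤ) * (-(n+1)) * (-(n+1) + 1) / 2 - (-(n+1))))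
      = fun n : ℕ => -(q ^ (2 * n ^ 2 + 3 * n + 1)) := by
    funext n
    rw [if_neg (by omega)]
    have he : (4:ℤ) * (-((n:ℤ)+1)) * (-((n:ℤ)+1) + 1) / 2 - (-((n:ℤ)+1))
        = ((2 * n ^ 2 + 3 * n + 1 : ℕ) : ℤ) := by
      have h4 : (4:ℤ) * (-((n:ℤ)+1)) * (-((n:ℤ)+1) + 1) = 2 * (2 * ((n:ℤ)+1) * (n:ℤ)) := by ring
      rw [h4, Int.mul_ediv_cancel_left _ two_ne_zero]
      push_cast; ring
    rw [he, zpow_natCast]; ring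
  have sA : Summable (fun n : ℕ => q ^ (2 * n ^ 2 + n)) := by
    refine summable_part hq _ fun k => ?_
    rw [norm_pow]
    refine pow_le_pow_of_le_one (norm_nonneg q) hq.le ?_
    nlinarith [sq_nonneg k]
  have sB : Summable (fun n : ℕ => -(q ^ (2 * n ^ 2 + 3 * n + 1))) := by
    refine summable_part hq _ fun k => ?_
    rw [norm_neg, norm_pow]
    refine pow_le_pow_of_le_one (norm_nonneg q) hq.le ?_
    nlinarith [sq_nonneg k]
  have p1 : ∀ n : ℕ, (if 0 ≤ ((n:ℤ)) then (1:ℂ) else -1) * q ^ ((4:ℤ) * n * (n + 1) / 2 - n)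
      = q ^ (2 * n ^ 2 + n) := fun n => congrFun eq1 n
  have p2 : ∀ n : ℕ, (if 0 ≤ (-(n+1):ℤ) then (1:ℂ) else -1) * q ^ ((4:ℤ) * (-(n+1)) * (-(n+1) + 1) / 2 - (-(n+1)))
      = -(q ^ (2 * n ^ 2 + 3 * n + 1)) := fun n => congrFun eq2 n
  rw [hg, tsum_of_nat_of_neg_add_one (sA.congr fun n => (p1 n).symm)
    (sB.congr fun n => (p2 n).symm), tsum_congr p1, tsum_congr p2]
  have p3 : ∀ k : ℕ, (-1:ℂ) ^ (2 * k) * q ^ ((2 * k) * (2 * k + 1) / 2) = q ^ (2 * k ^ 2 + k) := by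
    intro k
    rw [pow_mul, show (2 * k) * (2 * k + 1) = 2 * (2 * k ^ 2 + k) from by ring,
      Nat.mul_div_cancel_left _ (by norm_num : 0 < 2)]
    norm_num
  have p4 : ∀ k : ℕ, (-1:ℂ) ^ (2 * k + 1) * q ^ ((2 * k + 1) * (2 * k + 1 + 1) / 2)
      = -(q ^ (2 * k ^ 2 + 3 * k + 1)) := by
    intro k
    rw [pow_succ, pow_mul, show (2 * k + 1) * (2 * k + 1 + 1) = 2 * (2 * k ^ 2 + 3 * k + 1) from by ring,
      Nat.mul_div_cancel_left _ (by norm_num : 0 < 2)]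
    norm_num
  have he : Summable (fun k : ℕ => (-1:ℂ) ^ (2*k) * q ^ ((2*k) * (2*k+1) / 2)) :=
    sA.congr fun k => (p3 k).symm
  have ho : Summable (fun k : ℕ => (-1:ℂ) ^ (2*k+1) * q ^ ((2*k+1) * (2*k+1+1) / 2)) :=
    sB.congr fun k => (p4 k).symm
  have hEO := tsum_even_add_odd (f := fun j : ℕ => (-1:ℂ) ^ j * q ^ (j * (j+1) / 2)) he ho
  exact (congrArg₂ (· + ·) (tsum_congr fun k => (p3 k).symm)
    (tsum_congr fun k => (p4 k).symm)).trans hEO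


end Fixedq

theorem double_sum_h4 (q : ℂ) (hq : ‖q‖ < 1) :
    ∑' (m : ℕ) (n : ℕ), (-1 : ℂ) ^ n * q ^ (m ^ 2 + m + m * n + n * (n + 1) / 2) /
      (qPoch q m * qPoch q n) = hseries 4 q := by
  exact (lhs_eq hq).trans (rhs_eq hq).symm
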